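/- If n is a prime, then the number of normal subgroups of ZM(m,n,r) equals τ(m) + 1, where τ denotes the number-of-divisors function. (Here m > 1 and r has multiplicative order n modulo m, i.e., the group is nonabelian.) -/

import Mathlib

set_option linter.unusedSectionVars false
set_option linter.unusedVariables false
set_option maxHeartbeats 1000000

section Aux

lemma pow_mod_of_pow_eq_one {M : Type*} [Monoid M] {x : M} {n : ℕ} (hx : x ^ n = 1) (k : ℕ) :
    x ^ (k % n) = x ^ k := by
  conv_rhs => rw [← Nat.div_add_mod k n]
  rw [pow_add, pow_mul, hx, one_pow, one_mul]

variable (m n : ℕ) (r : ℤ)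

/-- `r` as a unit of `ZMod m`. -/
def runit (hn : 0 < n) (hru : ((r : ZMod m)) ^ n = 1) : (ZMod m)ˣ where
  val := (r : ZMod m)
  inv := (r : ZMod m) ^ (n - 1)
  val_inv := by
    rw [← pow_succ']
    rwa [Nat.sub_add_cancel hn]
  inv_val := by
    rw [← pow_succ]
    rwa [Nat.sub_add_cancel hn]

lemma runit_pow_n (hn : 0 < n) (hru : ((r : ZMod m)) ^ n = 1) :
    (runit m n r hn hru) ^ n = 1 := by
  ext
  push_cast [runit]
  exact hru

variable [NeZero n]

/-- The homomorphism `ZMod n → (ZMod m)ˣ` sending `1` to `runit`. -/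
def psi (hn : 0 < n) (hru : ((r : ZMod m)) ^ n = 1) :
    Multiplicative (ZMod n) →* (ZMod m)ˣ :=
  MonoidHom.mk' (fun j => (runit m n r hn hru) ^ (j.toAdd.val)) (by
    intro a b
    simp only [toAdd_mul]
    rw [ZMod.val_add, pow_mod_of_pow_eq_one (runit_pow_n m n r hn hru), pow_add])

/-- `AddAut A` to `MulAut (Multiplicative A)` as a monoid hom. -/
def addAutToMulAut (A : Type*) [AddGroup A] : Multiplicative (AddAut A) →* MulAut (Multiplicative A) :=
  MonoidHom.mk' (fun f => AddEquiv.toMultiplicative f.toAdd) (fun _ _ => rfl)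

/-- The action of `ZMod n` on `ZMod m` by multiplication by powers of `r`. -/
def phi (hn : 0 < n) (hru : ((r : ZMod m)) ^ n = 1) :
    Multiplicative (ZMod n) →* MulAut (Multiplicative (ZMod m)) :=
  (addAutToMulAut (ZMod m)).comp ((AddAut.mulLeft : (ZMod m)ˣ →* Multiplicative (AddAut (ZMod m))).comp
    (psi m n r hn hru))

lemma phi_apply (hn : 0 < n) (hru : ((r : ZMod m)) ^ n = 1) (j : Multiplicative (ZMod n))
    (x : Multiplicative (ZMod m)) :
    phi m n r hn hru j x =
      Multiplicative.ofAdd ((((psi m n r hn hru) j : (ZMod m)ˣ) : ZMod m) * x.toAdd) := by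
  rfl

end Aux

def ZMrels (m n : ℕ) (r : ℤ) : Set (FreeGroup Bool) :=
  {FreeGroup.of true ^ m, FreeGroup.of false ^ n,
   (FreeGroup.of false)⁻¹ * FreeGroup.of true * FreeGroup.of false * (FreeGroup.of true) ^ (-r)}

abbrev ZM (m n : ℕ) (r : ℤ) : Type := PresentedGroup (ZMrels m n r)

def ZMa (m n : ℕ) (r : ℤ) : ZM m n r := PresentedGroup.of true

def ZMb (m n : ℕ) (r : ℤ) : ZM m n r := PresentedGroup.of false

section Rels

variable (m n : ℕ) (r : ℤ)

lemma ZM_rel_of_mem {x : FreeGroup Bool} (hx : x ∈ ZMrels m n r) :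
    PresentedGroup.mk (ZMrels m n r) x = 1 := by
  have : x ∈ Subgroup.normalClosure (ZMrels m n r) := Subgroup.subset_normalClosure hx
  exact (QuotientGroup.eq_one_iff _).2 this

lemma ZMa_pow_m : (ZMa m n r) ^ m = 1 := by
  have := ZM_rel_of_mem m n r (x := FreeGroup.of true ^ m) (Or.inl rfl)
  rwa [map_pow] at this

lemma ZMb_pow_n : (ZMb m n r) ^ n = 1 := by
  have := ZM_rel_of_mem m n r (x := FreeGroup.of false ^ n) (Or.inr (Or.inl rfl))
  rwa [map_pow] at this

lemma ZM_conj_rel : (ZMb m n r)⁻¹ * ZMa m n r * ZMb m n r = (ZMa m n r) ^ r := by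
  have := ZM_rel_of_mem m n r
    (x := (FreeGroup.of false)⁻¹ * FreeGroup.of true * FreeGroup.of false *
      (FreeGroup.of true) ^ (-r)) (Or.inr (Or.inr rfl))
  rw [map_mul, map_mul, map_mul, map_inv, map_zpow] at this
  have h2 := mul_eq_one_iff_eq_inv.1 this
  change ((PresentedGroup.mk (ZMrels m n r)) (FreeGroup.of false))⁻¹ *
    (PresentedGroup.mk (ZMrels m n r)) (FreeGroup.of true) *
    (PresentedGroup.mk (ZMrels m n r)) (FreeGroup.of false) =
    (PresentedGroup.mk (ZMrels m n r)) (FreeGroup.of true) ^ r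
  rw [h2, ← zpow_neg, neg_neg]

end Rels

section Model

variable (m n : ℕ) (r : ℤ) [NeZero m] [NeZero n]

/-- helper: homs out of `Multiplicative (ZMod N)` are determined by the image of `ofAdd 1`. -/
lemma multZModHom_ext {N : ℕ} [NeZero N] {H : Type*} [Monoid H]
    {f g : Multiplicative (ZMod N) →* H}
    (h : f (Multiplicative.ofAdd 1) = g (Multiplicative.ofAdd 1)) : f = g := by
  apply MonoidHom.ext; intro x
  have hx : x = (Multiplicative.ofAdd (1 : ZMod N)) ^ (x.toAdd.val) := by
    rw [← ofAdd_nsmul, nsmul_eq_mul, mul_one, ZMod.natCast_val, ZMod.cast_id]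
    rfl
  rw [hx, map_pow, map_pow, h]

variable (hn : 0 < n) (hru : ((r : ZMod m)) ^ n = 1)

/-- The model: semidirect product of `ZMod m` and `ZMod n`. -/
abbrev Mdl : Type :=
  SemidirectProduct (Multiplicative (ZMod m)) (Multiplicative (ZMod n)) (phi m n r hn hru)

open SemidirectProduct Multiplicative

lemma psi_ofAdd_one (hn1 : 1 < n) :
    ((psi m n r hn hru (ofAdd 1) : (ZMod m)ˣ) : ZMod m) = (r : ZMod m) := by
  haveI : Fact (1 < n) := ⟨hn1⟩
  show ((runit m n r hn hru ^ ((1 : ZMod n).val) : (ZMod m)ˣ) : ZMod m) = _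
  rw [ZMod.val_one, pow_one]
  rfl

lemma phi_ofAdd_one (hn1 : 1 < n) (x : Multiplicative (ZMod m)) :
    phi m n r hn hru (ofAdd 1) x = ofAdd ((r : ZMod m) * x.toAdd) := by
  rw [phi_apply, psi_ofAdd_one m n r hn hru hn1]

/-- generators of the model -/
def genMap (hn1 : 1 < n) : Bool → Mdl m n r hn hru := fun x =>
  if x then SemidirectProduct.inl (ofAdd 1) else SemidirectProduct.inr (ofAdd (-1))

lemma genMap_rels (hn1 : 1 < n) :
    ∀ rel ∈ ZMrels m n r, FreeGroup.lift (genMap m n r hn hru hn1) rel = 1 := by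
  intro rel hrel
  rcases hrel with h | h | h <;> subst h <;>
    simp only [map_pow, map_mul, map_inv, map_zpow, FreeGroup.lift_apply_of, genMap,
      if_pos, if_neg, Bool.false_eq_true, not_false_iff, ite_true, ite_false]
  · rw [← map_pow, ← ofAdd_nsmul, nsmul_eq_mul, mul_one, ZMod.natCast_self, ofAdd_zero, map_one]
  · rw [← map_pow, ← ofAdd_nsmul, nsmul_eq_mul, ZMod.natCast_self, zero_mul, ofAdd_zero, map_one]
  · have e1 : (ofAdd (-1 : ZMod n))⁻¹ = ofAdd (1 : ZMod n) := by rw [← ofAdd_neg, neg_neg]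
    have e2 : (ofAdd (1 : ZMod n))⁻¹ = ofAdd (-1 : ZMod n) := by rw [← ofAdd_neg]
    rw [← map_inv, e1]
    have h3 : (SemidirectProduct.inr (ofAdd (1 : ZMod n)) : Mdl m n r hn hru) *
        SemidirectProduct.inl (ofAdd 1) * SemidirectProduct.inr (ofAdd (-1 : ZMod n)) =
        SemidirectProduct.inl (phi m n r hn hru (ofAdd 1) (ofAdd 1)) := by
      rw [show (ofAdd (-1 : ZMod n)) = (ofAdd (1 : ZMod n))⁻¹ from by rw [← ofAdd_neg]]
      exact (inl_aut _ _).symm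
    rw [h3, ← map_zpow, ← map_mul, phi_ofAdd_one m n r hn hru hn1]
    have e3 : ((ofAdd (1 : ZMod m)) ^ (-r)) = ofAdd ((-r) • (1 : ZMod m)) := by
      rw [ofAdd_zsmul]
    rw [e3, ← ofAdd_add]
    simp only [toAdd_ofAdd, mul_one, zsmul_eq_mul, mul_one]
    push_cast
    rw [add_neg_cancel, ofAdd_zero, map_one]

/-- The forward homomorphism. -/
def fwd (hn1 : 1 < n) : ZM m n r →* Mdl m n r hn hru :=
  PresentedGroup.toGroup (genMap_rels m n r hn hru hn1)

lemma fwd_a (hn1 : 1 < n) : fwd m n r hn hru hn1 (ZMa m n r) = SemidirectProduct.inl (ofAdd 1) :=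
  PresentedGroup.toGroup.of _

lemma fwd_b (hn1 : 1 < n) :
    fwd m n r hn hru hn1 (ZMb m n r) = SemidirectProduct.inr (ofAdd (-1)) :=
  PresentedGroup.toGroup.of _

end Model

section Bwd

open Multiplicative SemidirectProduct

lemma zpow_eq_zpow_of_dvd {G : Type*} [Group G] {x : G} {M : ℕ} (h : x ^ M = 1) {z w : ℤ}
    (hzw : (M : ℤ) ∣ z - w) : x ^ z = x ^ w := by
  obtain ⟨c, hc⟩ := hzw
  have hz : z = w + M * c := by linarith
  rw [hz, zpow_add, zpow_mul, zpow_natCast, h, one_zpow, mul_one]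

lemma zpow_natCast_val {G : Type*} [Group G] {M : ℕ} [NeZero M] {x : G} (h : x ^ M = 1)
    (z : ℤ) : x ^ (((z : ZMod M)).val) = x ^ z := by
  rw [← zpow_natCast]
  apply zpow_eq_zpow_of_dvd h
  rw [← ZMod.intCast_zmod_eq_zero_iff_dvd]
  push_cast
  rw [ZMod.natCast_val, ZMod.cast_id, sub_self]

variable (m n : ℕ) (r : ℤ) [NeZero m] [NeZero n]

def bA : Multiplicative (ZMod m) →* ZM m n r :=
  MonoidHom.mk' (fun i => (ZMa m n r) ^ (i.toAdd.val))
    (fun a b => by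
      simp only [toAdd_mul]
      rw [ZMod.val_add, pow_mod_of_pow_eq_one (ZMa_pow_m m n r), pow_add])

def bB : Multiplicative (ZMod n) →* ZM m n r :=
  MonoidHom.mk' (fun j => ((ZMb m n r)⁻¹) ^ (j.toAdd.val))
    (fun a b => by
      simp only [toAdd_mul]
      have hb : ((ZMb m n r)⁻¹) ^ n = 1 := by rw [inv_pow, ZMb_pow_n, inv_one]
      rw [ZMod.val_add, pow_mod_of_pow_eq_one hb, pow_add])

lemma ZMconj_pow (k : ℕ) :
    ((ZMb m n r)⁻¹) ^ k * (ZMa m n r) * ((ZMb m n r)) ^ k = (ZMa m n r) ^ (r ^ k) := by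
  induction k with
  | zero => simp
  | succ k ih =>
    rw [pow_succ' ((ZMb m n r)⁻¹), pow_succ (ZMb m n r)]
    have : (ZMb m n r)⁻¹ * ((ZMb m n r)⁻¹) ^ k * ZMa m n r * ((ZMb m n r) ^ k * ZMb m n r) =
        (ZMb m n r)⁻¹ * (((ZMb m n r)⁻¹) ^ k * ZMa m n r * (ZMb m n r) ^ k) * ZMb m n r := by
      group
    rw [this, ih]
    have h2 : (ZMb m n r)⁻¹ * (ZMa m n r) ^ (r ^ k) * ZMb m n r =
        ((ZMb m n r)⁻¹ * ZMa m n r * ZMb m n r) ^ (r ^ k) := by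
      have := map_zpow (MulAut.conj ((ZMb m n r)⁻¹)) (ZMa m n r) (r ^ k)
      simpa [MulAut.conj_apply] using this
    rw [h2, ZM_conj_rel, ← zpow_mul, ← pow_succ']

variable (hn : 0 < n) (hru : ((r : ZMod m)) ^ n = 1)

lemma bwd_compat (hm1 : 1 < m) :
    ∀ g : Multiplicative (ZMod n), (bA m n r).comp ((phi m n r hn hru g)).toMonoidHom =
      (MulAut.conj ((bB m n r) g)).toMonoidHom.comp (bA m n r) := by
  haveI : Fact (1 < m) := ⟨hm1⟩
  intro g
  apply multZModHom_ext
  simp only [MonoidHom.comp_apply, MulEquiv.coe_toMonoidHom, MulAut.conj_apply]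
  set k := (g.toAdd).val with hk
  have hL : phi m n r hn hru g (ofAdd 1) = ofAdd ((r : ZMod m) ^ k) := by
    rw [phi_apply]
    congr 1
    show ((runit m n r hn hru ^ k : (ZMod m)ˣ) : ZMod m) * (1 : ZMod m) = _
    rw [mul_one, Units.val_pow_eq_pow_val]
    rfl
  rw [hL]
  have hbA : ∀ x : ZMod m, bA m n r (ofAdd x) = (ZMa m n r) ^ (x.val) := fun _ => rfl
  simp only [hbA]
  have hbB : bB m n r g = ((ZMb m n r)⁻¹) ^ k := rfl
  rw [hbB]
  have hval1 : ((1 : ZMod m)).val = 1 := ZMod.val_one m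
  rw [hval1, pow_one]
  have hinv : (((ZMb m n r)⁻¹) ^ k)⁻¹ = (ZMb m n r) ^ k := by rw [inv_pow, inv_inv]
  rw [hinv, ZMconj_pow]
  have : ((r : ZMod m) ^ k) = (((r ^ k : ℤ) : ZMod m)) := by push_cast; ring
  rw [this, zpow_natCast_val (ZMa_pow_m m n r)]

/-- The backward homomorphism. -/
def bwd (hm1 : 1 < m) : Mdl m n r hn hru →* ZM m n r :=
  SemidirectProduct.lift (bA m n r) (bB m n r) (bwd_compat m n r hn hru hm1)

end Bwd

section Iso

open Multiplicative SemidirectProduct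

variable (m n : ℕ) (r : ℤ) [NeZero m] [NeZero n]
variable (hn : 0 < n) (hru : ((r : ZMod m)) ^ n = 1)

lemma bwd_fwd (hm1 : 1 < m) (hn1 : 1 < n) :
    (bwd m n r hn hru hm1).comp (fwd m n r hn hru hn1) = MonoidHom.id _ := by
  haveI : Fact (1 < m) := ⟨hm1⟩
  apply PresentedGroup.ext
  intro x
  rcases x with _ | _
  · -- false : generator b
    show bwd m n r hn hru hm1 (fwd m n r hn hru hn1 (ZMb m n r)) = ZMb m n r
    rw [fwd_b]
    rw [bwd, SemidirectProduct.lift_inr]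
    show ((ZMb m n r)⁻¹) ^ ((-1 : ZMod n)).val = ZMb m n r
    rw [inv_pow, ← zpow_natCast, ← zpow_neg]
    have : (ZMb m n r) = (ZMb m n r) ^ (1 : ℤ) := by rw [zpow_one]
    rw [this]
    apply zpow_eq_zpow_of_dvd (ZMb_pow_n m n r)
    rw [← ZMod.intCast_zmod_eq_zero_iff_dvd]
    push_cast
    rw [ZMod.natCast_val, ZMod.cast_id]
    ring
  · -- true : generator a
    show bwd m n r hn hru hm1 (fwd m n r hn hru hn1 (ZMa m n r)) = ZMa m n r
    rw [fwd_a]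
    rw [bwd, SemidirectProduct.lift_inl]
    show (ZMa m n r) ^ ((1 : ZMod m)).val = ZMa m n r
    rw [ZMod.val_one, pow_one]

lemma fwd_bwd (hm1 : 1 < m) (hn1 : 1 < n) :
    (fwd m n r hn hru hn1).comp (bwd m n r hn hru hm1) = MonoidHom.id _ := by
  haveI : Fact (1 < m) := ⟨hm1⟩
  haveI : Fact (1 < n) := ⟨hn1⟩
  apply SemidirectProduct.hom_ext
  · rw [MonoidHom.comp_assoc]
    have h1 : (bwd m n r hn hru hm1).comp SemidirectProduct.inl = bA m n r :=
      SemidirectProduct.lift_comp_inl _ _ _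
    rw [h1]
    apply multZModHom_ext
    show fwd m n r hn hru hn1 ((ZMa m n r) ^ ((1 : ZMod m)).val) = SemidirectProduct.inl (ofAdd 1)
    rw [ZMod.val_one, pow_one, fwd_a]
  · rw [MonoidHom.comp_assoc]
    have h1 : (bwd m n r hn hru hm1).comp SemidirectProduct.inr = bB m n r :=
      SemidirectProduct.lift_comp_inr _ _ _
    rw [h1]
    apply multZModHom_ext
    show fwd m n r hn hru hn1 (((ZMb m n r)⁻¹) ^ ((1 : ZMod n)).val) =
      SemidirectProduct.inr (ofAdd 1)
    rw [ZMod.val_one, pow_one, map_inv, fwd_b, ← map_inv]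
    congr 1
    rw [← ofAdd_neg, neg_neg]

/-- The isomorphism between the presented group and the model. -/
noncomputable def mdlEquiv (hm1 : 1 < m) (hn1 : 1 < n) : ZM m n r ≃* Mdl m n r hn hru :=
  MonoidHom.toMulEquiv (fwd m n r hn hru hn1) (bwd m n r hn hru hm1)
    (bwd_fwd m n r hn hru hm1 hn1) (fwd_bwd m n r hn hru hm1 hn1)

end Iso

section NumberTheory

lemma key_unit (m n : ℕ) (r : ℤ) (hnp : n.Prime) (hco2 : IsCoprime (m : ℤ) (r - 1))
    (hr : (m : ℤ) ∣ r ^ n - 1) {k : ℕ} (hk0 : 0 < k) (hkn : k < n) :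
    IsUnit ((r : ZMod m) ^ k - 1) := by
  have hcop : IsCoprime (m : ℤ) (r ^ k - 1) := by
    rw [Int.isCoprime_iff_gcd_eq_one]
    by_contra hg
    obtain ⟨p, hp, hpd⟩ := Nat.exists_prime_and_dvd hg
    have hpm : (p : ℤ) ∣ (m : ℤ) :=
      dvd_trans (Int.natCast_dvd_natCast.2 hpd) (Int.gcd_dvd_left _ _)
    have hpk : (p : ℤ) ∣ r ^ k - 1 :=
      dvd_trans (Int.natCast_dvd_natCast.2 hpd) (Int.gcd_dvd_right _ _)
    have hx1 : ((r : ZMod p)) ^ k = 1 := by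
      have : ((r ^ k - 1 : ℤ) : ZMod p) = 0 := by
        rw [ZMod.intCast_zmod_eq_zero_iff_dvd]; exact hpk
      push_cast at this
      linear_combination this
    have hx2 : ((r : ZMod p)) ^ n = 1 := by
      have : ((r ^ n - 1 : ℤ) : ZMod p) = 0 := by
        rw [ZMod.intCast_zmod_eq_zero_iff_dvd]; exact dvd_trans hpm hr
      push_cast at this
      linear_combination this
    have hord1 := orderOf_dvd_of_pow_eq_one hx1
    have hord2 := orderOf_dvd_of_pow_eq_one hx2
    have hcop2 : Nat.Coprime n k := (hnp.coprime_iff_not_dvd).2 (fun hdvd => by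
      have := Nat.le_of_dvd hk0 hdvd; omega)
    have : orderOf ((r : ZMod p)) ∣ Nat.gcd k n := Nat.dvd_gcd hord1 hord2
    rw [Nat.gcd_comm, hcop2] at this
    have hx : (r : ZMod p) = 1 := orderOf_eq_one_iff.1 (Nat.eq_one_of_dvd_one this)
    have hpr1 : (p : ℤ) ∣ r - 1 := by
      rw [← ZMod.intCast_zmod_eq_zero_iff_dvd]
      push_cast
      rw [hx, sub_self]
    have : (p : ℤ) ∣ (1 : ℤ) := by
      rw [Int.isCoprime_iff_gcd_eq_one] at hco2
      have := Int.dvd_coe_gcd hpm hpr1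
      rwa [hco2, Int.natCast_one] at this
    have := Int.le_of_dvd one_pos this
    have := hp.two_le
    omega
  obtain ⟨α, β, hab⟩ := hcop
  apply IsUnit.of_mul_eq_one ((β : ZMod m))
  have h1 : ((α * m + β * (r ^ k - 1) : ℤ) : ZMod m) = 1 := by rw [hab]; push_cast; ring
  push_cast at h1
  rw [ZMod.natCast_self] at h1
  linear_combination h1

end NumberTheory

section CountZMod

open AddSubgroup

variable (m : ℕ)

noncomputable def divisorSubgroup (d : ℕ) : AddSubgroup (ZMod m) :=
  AddSubgroup.map (Int.castAddHom (ZMod m)) (zmultiples (d : ℤ))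

lemma comap_divisorSubgroup {d : ℕ} (hd : d ∣ m) :
    AddSubgroup.comap (Int.castAddHom (ZMod m)) (divisorSubgroup m d) = zmultiples (d : ℤ) := by
  rw [divisorSubgroup, AddSubgroup.comap_map_eq, ZMod.ker_intCastAddHom]
  apply sup_of_le_left
  intro x hx
  rw [Int.mem_zmultiples_iff] at hx ⊢
  exact dvd_trans (Int.natCast_dvd_natCast.2 hd) hx

lemma divisorSubgroup_injOn : Set.InjOn (divisorSubgroup m) {d | d ∣ m} := by
  intro d1 h1 d2 h2 heq
  have : zmultiples ((d1 : ℤ)) = zmultiples ((d2 : ℤ)) := by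
    rw [← comap_divisorSubgroup m h1, ← comap_divisorSubgroup m h2, heq]
  have hd12 : (d1 : ℤ) ∣ (d2 : ℤ) := by
    rw [← Int.mem_zmultiples_iff, this]; exact mem_zmultiples _
  have hd21 : (d2 : ℤ) ∣ (d1 : ℤ) := by
    rw [← Int.mem_zmultiples_iff, ← this]; exact mem_zmultiples _
  exact Nat.dvd_antisymm (Int.natCast_dvd_natCast.1 hd12) (Int.natCast_dvd_natCast.1 hd21)

lemma divisorSubgroup_surj (hm : 0 < m) (S : AddSubgroup (ZMod m)) :
    ∃ d : ℕ, d ∣ m ∧ divisorSubgroup m d = S := by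
  set T := AddSubgroup.comap (Int.castAddHom (ZMod m)) S with hT
  obtain ⟨a, ha⟩ := Int.subgroup_cyclic T
  rw [← zmultiples_eq_closure] at ha
  have hmT : (m : ℤ) ∈ T := by
    show ((m : ℤ) : ZMod m) ∈ S
    push_cast
    rw [ZMod.natCast_self]
    exact zero_mem S
  have ham : a ∣ (m : ℤ) := by rwa [ha, Int.mem_zmultiples_iff] at hmT
  refine ⟨a.natAbs, ?_, ?_⟩
  · have := Int.natAbs_dvd_natAbs.2 ham
    simpa using this
  · have hza : zmultiples ((a.natAbs : ℤ)) = zmultiples a := by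
      ext x
      simp only [Int.mem_zmultiples_iff]
      exact Int.natAbs_dvd
    rw [divisorSubgroup, hza, ← ha, hT]
    exact AddSubgroup.map_comap_eq_self_of_surjective (ZMod.intCast_surjective) S

noncomputable def addSubgroupEquivDivisors (hm : 0 < m) :
    {d // d ∈ m.divisors} ≃ AddSubgroup (ZMod m) := by
  apply Equiv.ofBijective (fun d => divisorSubgroup m d.1)
  constructor
  · intro d1 d2 h
    apply Subtype.ext
    exact divisorSubgroup_injOn m (Nat.dvd_of_mem_divisors d1.2)
      (Nat.dvd_of_mem_divisors d2.2) h
  · intro S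
    obtain ⟨d, hd, hS⟩ := divisorSubgroup_surj m hm S
    exact ⟨⟨d, Nat.mem_divisors.2 ⟨hd, hm.ne'⟩⟩, hS⟩

lemma card_addSubgroup (hm : 0 < m) :
    Nat.card (AddSubgroup (ZMod m)) = m.divisors.card := by
  rw [← Nat.card_congr (addSubgroupEquivDivisors m hm), Nat.card_eq_fintype_card,
    Fintype.card_coe]

end CountZMod

section Classify

open Multiplicative SemidirectProduct

variable (m n : ℕ) (r : ℤ) [NeZero m] [NeZero n]
variable (hn : 0 < n) (hru : ((r : ZMod m)) ^ n = 1)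

lemma zmod_mul_mem {S : AddSubgroup (ZMod m)} {x : ZMod m} (hx : x ∈ S) (c : ZMod m) :
    c * x ∈ S := by
  have h : c * x = c.val • x := by rw [nsmul_eq_mul, ZMod.natCast_val, ZMod.cast_id]
  rw [h]
  exact nsmul_mem hx _

lemma mem_toSubgroup {S : AddSubgroup (ZMod m)} {x : Multiplicative (ZMod m)} :
    x ∈ AddSubgroup.toSubgroup S ↔ x.toAdd ∈ S := Iff.rfl

/-- The subgroup of the model corresponding to a subgroup of `ZMod m`. -/
def mapInl (S : AddSubgroup (ZMod m)) : Subgroup (Mdl m n r hn hru) :=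
  (AddSubgroup.toSubgroup S).map SemidirectProduct.inl

lemma conj_inl_eq (g : Mdl m n r hn hru) (y : Multiplicative (ZMod m)) :
    g * SemidirectProduct.inl y * g⁻¹ =
      SemidirectProduct.inl (phi m n r hn hru g.right y) := by
  conv_lhs => rw [← inl_left_mul_inr_right g]
  rw [mul_inv_rev,
    show (SemidirectProduct.inr g.right : Mdl m n r hn hru)⁻¹ =
      SemidirectProduct.inr g.right⁻¹ from (map_inv _ _).symm,
    show (SemidirectProduct.inl g.left : Mdl m n r hn hru)⁻¹ =
      SemidirectProduct.inl g.left⁻¹ from (map_inv _ _).symm]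
  have h1 : ((SemidirectProduct.inl g.left : Mdl m n r hn hru) * SemidirectProduct.inr g.right) *
      SemidirectProduct.inl y * (SemidirectProduct.inr g.right⁻¹ *
        SemidirectProduct.inl g.left⁻¹) =
      (SemidirectProduct.inl g.left : Mdl m n r hn hru) * (SemidirectProduct.inr g.right *
        SemidirectProduct.inl y * SemidirectProduct.inr g.right⁻¹) *
        SemidirectProduct.inl g.left⁻¹ := by group
  rw [h1, ← inl_aut, ← map_mul, ← map_mul]
  congr 1
  rw [mul_comm, ← mul_assoc, inv_mul_cancel, one_mul]

lemma mapInl_normal (S : AddSubgroup (ZMod m)) : (mapInl m n r hn hru S).Normal := by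
  constructor
  intro h hh g
  obtain ⟨y, hy, rfl⟩ := hh
  rw [conj_inl_eq]
  refine ⟨_, ?_, rfl⟩
  simp only [SetLike.mem_coe] at hy ⊢
  rw [mem_toSubgroup] at hy ⊢
  rw [phi_apply]
  exact zmod_mul_mem m hy _

lemma mem_range_inl_iff (x : Mdl m n r hn hru) :
    x ∈ (SemidirectProduct.inl :
      Multiplicative (ZMod m) →* Mdl m n r hn hru).range ↔ x.right = 1 := by
  constructor
  · rintro ⟨y, rfl⟩
    rfl
  · intro hx
    refine ⟨x.left, ?_⟩
    ext
    · rfl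
    · rw [hx]; rfl

/-- A normal subgroup that is not contained in the image of `ZMod m` is everything. -/
lemma normal_not_le_top {N : Subgroup (Mdl m n r hn hru)} (hN : N.Normal)
    (hnp : n.Prime) (hco2 : IsCoprime (m : ℤ) (r - 1)) (hr : (m : ℤ) ∣ r ^ n - 1)
    (hle : ¬ N ≤ ((SemidirectProduct.inl :
      Multiplicative (ZMod m) →* Mdl m n r hn hru).range)) :
    N = ⊤ := by
  haveI : Fact n.Prime := ⟨hnp⟩
  obtain ⟨x, hxN, hxA⟩ := SetLike.not_le_iff_exists.1 hle
  rw [mem_range_inl_iff] at hxA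
  set j : ZMod n := x.right.toAdd with hj
  have hj0 : j ≠ 0 := fun h => hxA (by
    show x.right = ofAdd 0
    rw [← h]
    rfl)
  -- the commutator element
  set w : ZMod m := ((psi m n r hn hru x.right : (ZMod m)ˣ) : ZMod m) with hw
  have hcomm : SemidirectProduct.inl (ofAdd (w - 1)) ∈ N := by
    have h1 : x * SemidirectProduct.inl (ofAdd 1) * x⁻¹ *
        (SemidirectProduct.inl (ofAdd 1))⁻¹ ∈ N := by
      have h2 : SemidirectProduct.inl (ofAdd 1) * x⁻¹ *
          (SemidirectProduct.inl (ofAdd 1))⁻¹ ∈ N := hN.conj_mem _ (N.inv_mem hxN) _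
      have h3 := N.mul_mem hxN h2
      rwa [← mul_assoc, ← mul_assoc] at h3
    have h4 : x * SemidirectProduct.inl (ofAdd 1) * x⁻¹ *
        (SemidirectProduct.inl (ofAdd 1))⁻¹ = SemidirectProduct.inl (ofAdd (w - 1)) := by
      rw [conj_inl_eq, ← map_inv, ← map_mul]
      congr 1
      rw [phi_apply]
      rw [← ofAdd_neg, ← ofAdd_add]
      congr 1
      rw [toAdd_ofAdd, mul_one]
      ring
    rwa [h4] at h1
  -- w - 1 is a unit
  have hunit : IsUnit (w - 1) := by
    have hval : w = (r : ZMod m) ^ (j.val) := by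
      rw [hw]
      show ((runit m n r hn hru ^ (x.right.toAdd.val) : (ZMod m)ˣ) : ZMod m) = _
      rw [Units.val_pow_eq_pow_val]
      rfl
    rw [hval]
    apply key_unit m n r hnp hco2 hr
    · exact Nat.pos_of_ne_zero (fun h => hj0 (by rwa [← ZMod.val_eq_zero]))
    · exact ZMod.val_lt j
  obtain ⟨W, hW⟩ := hunit
  -- all of inl is in N
  have hA : ∀ y : Multiplicative (ZMod m), SemidirectProduct.inl y ∈ N := by
    intro y
    have hy : y = (ofAdd (w - 1)) ^ ((y.toAdd * (W⁻¹ : (ZMod m)ˣ)).val) := by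
      rw [← ofAdd_nsmul]
      congr 1
      rw [nsmul_eq_mul, ZMod.natCast_val, ZMod.cast_id, mul_assoc, ← hW, Units.inv_mul,
        mul_one]
      rfl
    rw [hy, map_pow]
    exact N.pow_mem hcomm _
  -- inr x.right ∈ N
  have hinrj : SemidirectProduct.inr x.right ∈ N := by
    have h1 : (SemidirectProduct.inl x.left)⁻¹ * x ∈ N :=
      N.mul_mem (N.inv_mem (hA x.left)) hxN
    have h2 : (SemidirectProduct.inl x.left)⁻¹ * x = SemidirectProduct.inr x.right := by
      calc (SemidirectProduct.inl x.left)⁻¹ * x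
          = (SemidirectProduct.inl x.left)⁻¹ * (SemidirectProduct.inl x.left *
            SemidirectProduct.inr x.right) := by rw [inl_left_mul_inr_right]
        _ = SemidirectProduct.inr x.right := by rw [← mul_assoc, inv_mul_cancel, one_mul]
    rwa [h2] at h1
  -- all of inr is in N
  have hB : ∀ t : Multiplicative (ZMod n), SemidirectProduct.inr t ∈ N := by
    intro t
    have ht : t = x.right ^ ((t.toAdd * j⁻¹).val) := by
      show t = (ofAdd j) ^ _
      rw [← ofAdd_nsmul]
      show t = ofAdd (((t.toAdd * j⁻¹).val : ℕ) • j)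
      rw [nsmul_eq_mul, ZMod.natCast_val, ZMod.cast_id, mul_assoc,
        inv_mul_cancel₀ hj0, mul_one]
      rfl
    rw [ht, map_pow]
    exact N.pow_mem hinrj _
  rw [eq_top_iff]
  intro g _
  rw [← inl_left_mul_inr_right g]
  exact N.mul_mem (hA g.left) (hB g.right)

end Classify

section Count

open Multiplicative SemidirectProduct

variable (m n : ℕ) (r : ℤ) [NeZero m] [NeZero n]
variable (hn : 0 < n) (hru : ((r : ZMod m)) ^ n = 1)

lemma mapInl_ne_top (hn1 : 1 < n) (S : AddSubgroup (ZMod m)) :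
    mapInl m n r hn hru S ≠ ⊤ := by
  haveI : Fact (1 < n) := ⟨hn1⟩
  intro h
  have hmem : SemidirectProduct.inr (ofAdd (1 : ZMod n)) ∈ mapInl m n r hn hru S := by
    rw [h]; trivial
  obtain ⟨y, _, hy⟩ := hmem
  have h2 := congrArg SemidirectProduct.right hy
  have h3 : (1 : Multiplicative (ZMod n)) = ofAdd (1 : ZMod n) := h2
  have h4 : (0 : ZMod n) = 1 := congrArg toAdd h3
  exact zero_ne_one h4

noncomputable def normalEquiv (hnp : n.Prime) (hco2 : IsCoprime (m : ℤ) (r - 1))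
    (hr : (m : ℤ) ∣ r ^ n - 1) :
    (AddSubgroup (ZMod m)) ⊕ PUnit.{1} ≃ {H : Subgroup (Mdl m n r hn hru) // H.Normal} := by
  apply Equiv.ofBijective (fun s => match s with
    | Sum.inl S => ⟨mapInl m n r hn hru S, mapInl_normal m n r hn hru S⟩
    | Sum.inr _ => ⟨(⊤ : Subgroup (Mdl m n r hn hru)), inferInstance⟩)
  constructor
  · rintro (S1 | u1) (S2 | u2) h
    · simp only [Subtype.mk_eq_mk] at h
      congr 1
      have h2 := Subgroup.map_injective
        (SemidirectProduct.inl_injective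
          (φ := phi m n r hn hru)) h
      exact AddSubgroup.toSubgroup.injective h2
    · exact absurd (congrArg Subtype.val h) (mapInl_ne_top m n r hn hru hnp.one_lt S1)
    · exact absurd (congrArg Subtype.val h).symm (mapInl_ne_top m n r hn hru hnp.one_lt S2)
    · rcases u1; rcases u2; rfl
  · rintro ⟨N, hN⟩
    by_cases hle : N ≤ (SemidirectProduct.inl :
        Multiplicative (ZMod m) →* Mdl m n r hn hru).range
    · refine ⟨Sum.inl (Subgroup.toAddSubgroup' (N.comap SemidirectProduct.inl)), ?_⟩
      apply Subtype.ext
      show mapInl m n r hn hru _ = N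
      rw [mapInl, OrderIso.apply_symm_apply]
      exact Subgroup.map_comap_eq_self hle
    · refine ⟨Sum.inr PUnit.unit, ?_⟩
      apply Subtype.ext
      exact (normal_not_le_top m n r hn hru hN hnp hco2 hr hle).symm

lemma card_normal_Mdl (hm : 0 < m) (hnp : n.Prime) (hco2 : IsCoprime (m : ℤ) (r - 1))
    (hr : (m : ℤ) ∣ r ^ n - 1) :
    Nat.card {H : Subgroup (Mdl m n r hn hru) // H.Normal} = m.divisors.card + 1 := by
  haveI : Finite (AddSubgroup (ZMod m)) :=
    Finite.of_injective (fun S => (S : Set (ZMod m))) SetLike.coe_injective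
  rw [← Nat.card_congr (normalEquiv m n r hn hru hnp hco2 hr), Nat.card_sum,
    card_addSubgroup m hm]
  simp

end Count

theorem stmt9 (m n : ℕ) (r : ℤ) (hm : 0 < m) (hn : 0 < n)
    (hco : Nat.Coprime m n) (hco2 : IsCoprime (m : ℤ) (r - 1))
    (hr : (m : ℤ) ∣ r ^ n - 1) (hnp : n.Prime) (hm1 : 1 < m)
    (hr1 : ¬ ((m : ℤ) ∣ r - 1)) :
    Nat.card {H : Subgroup (ZM m n r) // H.Normal} = m.divisors.card + 1 := by
  haveI : NeZero m := ⟨hm.ne'⟩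
  haveI : NeZero n := ⟨hn.ne'⟩
  have hn1 : 1 < n := hnp.one_lt
  have hru : ((r : ZMod m)) ^ n = 1 := by
    have h0 : ((r ^ n - 1 : ℤ) : ZMod m) = 0 := (ZMod.intCast_zmod_eq_zero_iff_dvd _ _).2 hr
    push_cast at h0
    linear_combination h0
  set e := mdlEquiv m n r hn hru hm1 hn1 with he
  have E : {H : Subgroup (ZM m n r) // H.Normal} ≃
      {H : Subgroup (Mdl m n r hn hru) // H.Normal} :=
    { toFun := fun H => ⟨H.1.comap e.symm.toMonoidHom, H.2.comap _⟩
      invFun := fun H => ⟨H.1.comap e.toMonoidHom, H.2.comap _⟩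
      left_inv := fun H => by
        apply Subtype.ext
        ext x
        simp [Subgroup.mem_comap]
      right_inv := fun H => by
        apply Subtype.ext
        ext x
        simp [Subgroup.mem_comap] }
  rw [Nat.card_congr E, card_normal_Mdl m n r hn hru hm hnp hco2 hr]
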